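/- Let $X$ be a compact metric space, $f: X \to X$ continuous, and suppose every $f$-invariant Borel probability measure $\mu$ satisfies $\int \phi \, d\mu > \alpha$ for a fixed continuous function $\phi: X \to \mathbb{R}$ and constant $\alpha$. Then there exists $N$ such that for all $n \geq N$ and all $x \in X$, $\frac{1}{n}\sum_{i=0}^{n-1} \phi(f^i(x)) > \alpha$. -/

import Mathlib

open MeasureTheory Set Filter Topology TopologicalSpace BoundedContinuousFunction
open scoped NNReal ENNReal
set_option linter.unusedSectionVars false
set_option maxHeartbeats 1000000

namespace UBLB

variable {X : Type*} [MetricSpace X] [CompactSpace X] [Nonempty X]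
  [MeasurableSpace X] [BorelSpace X]

/-- A positive, normalized, linear functional on `C(X, ℝ)`. -/
structure IsPosFunctional (ℓ : C(X, ℝ) → ℝ) : Prop where
  add : ∀ F G, ℓ (F + G) = ℓ F + ℓ G
  smul : ∀ (c : ℝ) F, ℓ (c • F) = c * ℓ F
  mono : ∀ F G : C(X, ℝ), (∀ x, F x ≤ G x) → ℓ F ≤ ℓ G
  one : ℓ 1 = 1

namespace IsPosFunctional

variable {ℓ : C(X, ℝ) → ℝ}

theorem zero (hℓ : IsPosFunctional ℓ) : ℓ 0 = 0 := by
  have := hℓ.add 0 0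
  simp only [add_zero] at this
  linarith

theorem nonneg (hℓ : IsPosFunctional ℓ) {F : C(X, ℝ)} (h : ∀ x, 0 ≤ F x) : 0 ≤ ℓ F := by
  have := hℓ.mono 0 F (by simpa using h)
  simpa [hℓ.zero] using this

theorem sub (hℓ : IsPosFunctional ℓ) (F G : C(X, ℝ)) : ℓ (F - G) = ℓ F - ℓ G := by
  have := hℓ.add G (F - G)
  simp only [add_sub_cancel] at this
  linarith

theorem const (hℓ : IsPosFunctional ℓ) (c : ℝ) : ℓ (ContinuousMap.const X c) = c := by
  have h : (ContinuousMap.const X c) = c • (1 : C(X, ℝ)) := by ext x; simp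
  rw [h, hℓ.smul c 1, hℓ.one, mul_one]

end IsPosFunctional

/-- The set of test functions for a compact set. -/
def Adm (K : Set X) (F : C(X, ℝ)) : Prop := (∀ x, 0 ≤ F x) ∧ ∀ x ∈ K, 1 ≤ F x

/-- Riesz-type content from a functional. -/
noncomputable def rc (ℓ : C(X, ℝ) → ℝ) (K : Compacts X) : ℝ≥0 :=
  sInf ((fun F => (ℓ F).toNNReal) '' {F | Adm (K : Set X) F})

variable {ℓ : C(X, ℝ) → ℝ}

theorem rc_image_nonempty (K : Compacts X) :
    ((fun F => (ℓ F).toNNReal) '' {F | Adm (K : Set X) F}).Nonempty := by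
  rw [image_nonempty]
  exact ⟨1, fun x => by simp, fun x _ => by simp⟩

theorem rc_le {K : Compacts X} {F : C(X, ℝ)} (h : Adm (K : Set X) F) :
    rc ℓ K ≤ (ℓ F).toNNReal :=
  csInf_le (OrderBot.bddBelow _) ⟨F, h, rfl⟩

theorem rc_mono {K₁ K₂ : Compacts X} (h : (K₁ : Set X) ⊆ K₂) : rc ℓ K₁ ≤ rc ℓ K₂ :=
  csInf_le_csInf (OrderBot.bddBelow _) (rc_image_nonempty K₂)
    (image_mono (fun F hF => ⟨hF.1, fun x hx => hF.2 x (h hx)⟩))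

theorem exists_lt_rc_add (hℓ : IsPosFunctional ℓ) (K : Compacts X) {ε : ℝ≥0} (hε : 0 < ε) :
    ∃ F : C(X, ℝ), Adm (K : Set X) F ∧ (ℓ F).toNNReal < rc ℓ K + ε := by
  obtain ⟨t, ⟨F, hF, rfl⟩, ht⟩ :=
    exists_lt_of_csInf_lt (rc_image_nonempty (ℓ := ℓ) K) (lt_add_of_pos_right (rc ℓ K) hε)
  exact ⟨F, hF, ht⟩

theorem rc_sup_le (hℓ : IsPosFunctional ℓ) (K₁ K₂ : Compacts X) :
    rc ℓ (K₁ ⊔ K₂) ≤ rc ℓ K₁ + rc ℓ K₂ := by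
  refine le_of_forall_pos_le_add fun ε hε => ?_
  obtain ⟨F₁, hF₁, h₁⟩ := exists_lt_rc_add hℓ K₁ (half_pos hε)
  obtain ⟨F₂, hF₂, h₂⟩ := exists_lt_rc_add hℓ K₂ (half_pos hε)
  have hadm : Adm ((K₁ ⊔ K₂ : Compacts X) : Set X) (F₁ + F₂) := by
    constructor
    · intro x; simpa using add_nonneg (hF₁.1 x) (hF₂.1 x)
    · rintro x (hx | hx)
      · simpa using le_add_of_le_of_nonneg (hF₁.2 x hx) (hF₂.1 x)
      · simpa using le_add_of_nonneg_of_le (hF₁.1 x) (hF₂.2 x hx)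
  refine (rc_le hadm).trans ?_
  have : (ℓ (F₁ + F₂)).toNNReal ≤ (ℓ F₁).toNNReal + (ℓ F₂).toNNReal := by
    rw [hℓ.add]; exact Real.toNNReal_add_le
  refine this.trans ?_
  calc (ℓ F₁).toNNReal + (ℓ F₂).toNNReal ≤ (rc ℓ K₁ + ε / 2) + (rc ℓ K₂ + ε / 2) :=
        add_le_add h₁.le h₂.le
    _ = rc ℓ K₁ + rc ℓ K₂ + ε := by
        rw [add_add_add_comm, add_halves]

theorem rc_sup_disjoint (hℓ : IsPosFunctional ℓ) (K₁ K₂ : Compacts X)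
    (hd : Disjoint (K₁ : Set X) K₂) :
    rc ℓ (K₁ ⊔ K₂) = rc ℓ K₁ + rc ℓ K₂ := by
  refine le_antisymm (rc_sup_le hℓ K₁ K₂) ?_
  obtain ⟨u, hu₁, hu₂, hu01⟩ :=
    exists_continuous_zero_one_of_isCompact K₁.isCompact K₂.isCompact.isClosed hd
  refine le_csInf (rc_image_nonempty _) ?_
  rintro t ⟨F, hF, rfl⟩
  -- F₁ := F * (1 - u) is a test function for K₁, F₂ := F * u for K₂
  set F₁ : C(X, ℝ) := F * (1 - u) with hF₁def
  set F₂ : C(X, ℝ) := F * u with hF₂def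
  have hadm₁ : Adm (K₁ : Set X) F₁ := by
    constructor
    · intro x
      simp only [hF₁def, ContinuousMap.mul_apply, ContinuousMap.sub_apply,
        ContinuousMap.one_apply]
      exact mul_nonneg (hF.1 x) (by linarith [(hu01 x).2])
    · intro x hx
      have h1 : u x = 0 := hu₁ hx
      have h2 : (1 : ℝ) ≤ F x := hF.2 x (Or.inl hx)
      simp only [hF₁def, ContinuousMap.mul_apply, ContinuousMap.sub_apply,
        ContinuousMap.one_apply, h1]
      linarith
  have hadm₂ : Adm (K₂ : Set X) F₂ := by
    constructor
    · intro x
      exact mul_nonneg (hF.1 x) (hu01 x).1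
    · intro x hx
      have h1 : u x = 1 := hu₂ hx
      have h2 : (1 : ℝ) ≤ F x := hF.2 x (Or.inr hx)
      simp only [hF₂def, ContinuousMap.mul_apply, h1]
      linarith
  have hsum : F₁ + F₂ = F := by
    ext x; simp [hF₁def, hF₂def]; ring
  have h₁ : 0 ≤ ℓ F₁ := hℓ.nonneg hadm₁.1
  have h₂ : 0 ≤ ℓ F₂ := hℓ.nonneg hadm₂.1
  calc rc ℓ K₁ + rc ℓ K₂ ≤ (ℓ F₁).toNNReal + (ℓ F₂).toNNReal :=
        add_le_add (rc_le hadm₁) (rc_le hadm₂)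
    _ = (ℓ F₁ + ℓ F₂).toNNReal := (Real.toNNReal_add h₁ h₂).symm
    _ = (ℓ F).toNNReal := by rw [← hℓ.add, hsum]

/-- The content associated to a positive functional. -/
noncomputable def rieszContent (hℓ : IsPosFunctional ℓ) : Content X where
  toFun := rc ℓ
  mono' := fun _ _ h => rc_mono h
  sup_disjoint' := fun K₁ K₂ hd _ _ => rc_sup_disjoint hℓ K₁ K₂ hd
  sup_le' := rc_sup_le hℓ


theorem measure_compacts_le {ℓ : C(X, ℝ) → ℝ} (C : MeasureTheory.Content X)
    (hC : ∀ (K : Compacts X) (F : C(X, ℝ)), (∀ x, 0 ≤ F x) → (∀ x ∈ (K : Set X), 1 ≤ F x) →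
      C K ≤ (ℓ F).toNNReal)
    (hsmul : ∀ (c : ℝ) F, ℓ (c • F) = c * ℓ F)
    (hmono : ∀ F G : C(X, ℝ), (∀ x, F x ≤ G x) → ℓ F ≤ ℓ G)
    (hzero : ℓ 0 = 0)
    {K : Compacts X} {F : C(X, ℝ)} (h0 : ∀ x, 0 ≤ F x)
    (h1 : ∀ x ∈ (K : Set X), 1 ≤ F x) :
    C.measure (K : Set X) ≤ ENNReal.ofReal (ℓ F) := by
  have hFnn : 0 ≤ ℓ F := by
    have := hmono 0 F (by simpa using h0); simpa [hzero] using this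
  have key : ∀ ε : ℝ, 0 < ε → ε < 1 →
      C.measure (K : Set X) ≤ ENNReal.ofReal ((1 - ε)⁻¹ * ℓ F) := by
    intro ε hε hε1
    have h1ε : (0:ℝ) < 1 - ε := by linarith
    set U : Set X := {x | 1 - ε < F x} with hU
    have hUopen : IsOpen U := isOpen_lt continuous_const F.continuous
    have hKU : (K : Set X) ⊆ U := fun x hx => lt_of_lt_of_le (by linarith) (h1 x hx)
    calc C.measure (K : Set X) ≤ C.measure U := measure_mono hKU
      _ = C.outerMeasure U := C.measure_apply hUopen.measurableSet
      _ = C.innerContent ⟨U, hUopen⟩ := C.outerMeasure_opens ⟨U, hUopen⟩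
      _ ≤ ENNReal.ofReal ((1 - ε)⁻¹ * ℓ F) := by
          refine iSup_le fun K' => iSup_le fun hK' => ?_
          have hadm0 : ∀ x, 0 ≤ ((1 - ε)⁻¹ • F) x := by
            intro x
            simpa using mul_nonneg (inv_nonneg.mpr h1ε.le) (h0 x)
          have hadm1 : ∀ x ∈ (K' : Set X), 1 ≤ ((1 - ε)⁻¹ • F) x := by
            intro x hx
            have : 1 - ε < F x := hK' hx
            have := (one_le_inv_mul₀ h1ε).mpr this.le
            simpa using this
          have := hC K' ((1 - ε)⁻¹ • F) hadm0 hadm1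
          calc (C K' : ℝ≥0∞) ≤ ((ℓ ((1 - ε)⁻¹ • F)).toNNReal : ℝ≥0∞) := by
                exact_mod_cast this
            _ = ENNReal.ofReal ((1 - ε)⁻¹ * ℓ F) := by
                rw [hsmul]; rfl
  have htend : Tendsto (fun m : ℕ => ENNReal.ofReal ((1 - ((m:ℝ)+2)⁻¹)⁻¹ * ℓ F)) atTop
      (𝓝 (ENNReal.ofReal (ℓ F))) := by
    have h0 : Tendsto (fun m : ℕ => ((m:ℝ)+2)⁻¹) atTop (𝓝 0) := by
      apply tendsto_inv_atTop_zero.comp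
      exact tendsto_atTop_add_const_right _ 2 tendsto_natCast_atTop_atTop
    have : Tendsto (fun m : ℕ => (1 - ((m:ℝ)+2)⁻¹)⁻¹ * ℓ F) atTop (𝓝 (ℓ F)) := by
      have h1 : Tendsto (fun m : ℕ => (1 - ((m:ℝ)+2)⁻¹)) atTop (𝓝 (1 - 0)) :=
        tendsto_const_nhds.sub h0
      have h2 := (h1.inv₀ (by norm_num)).mul_const (ℓ F)
      simpa using h2
    exact (ENNReal.continuous_ofReal.tendsto _).comp this
  refine ge_of_tendsto htend (Eventually.of_forall fun m => ?_)
  have hp : (0:ℝ) < ((m:ℝ)+2)⁻¹ := by positivity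
  have h2 : (1:ℝ) < (m:ℝ) + 2 := by have := Nat.cast_nonneg (α := ℝ) m; linarith
  have hl : ((m:ℝ)+2)⁻¹ < 1 := by
    rw [inv_lt_one_iff₀]; right; exact h2
  exact key _ hp hl

theorem lintegral_le {ℓ : C(X, ℝ) → ℝ} {μ : Measure X}
    (hA : ∀ (K : Compacts X) (F : C(X, ℝ)), (∀ x, 0 ≤ F x) → (∀ x ∈ (K : Set X), 1 ≤ F x) →
      μ (K : Set X) ≤ ENNReal.ofReal (ℓ F))
    (hμuniv : μ univ ≤ 1)
    (hadd : ∀ F G, ℓ (F + G) = ℓ F + ℓ G)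
    (hsmul : ∀ (c : ℝ) F, ℓ (c • F) = c * ℓ F)
    (hmono : ∀ F G : C(X, ℝ), (∀ x, F x ≤ G x) → ℓ F ≤ ℓ G)
    (hzero : ℓ 0 = 0)
    (g : C(X, ℝ)) (hg : ∀ x, 0 ≤ g x) :
    ∫⁻ x, ENNReal.ofReal (g x) ∂μ ≤ ENNReal.ofReal (ℓ g) := by
  have hsub : ∀ F G : C(X, ℝ), ℓ (F - G) = ℓ F - ℓ G := by
    intro F G
    have := hadd G (F - G)
    simp only [add_sub_cancel] at this
    linarith
  have hlnn : ∀ F : C(X, ℝ), (∀ x, 0 ≤ F x) → 0 ≤ ℓ F := by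
    intro F hF
    have := hmono 0 F (by simpa using hF); simpa [hzero] using this
  set M : ℝ := ‖mkOfCompact g‖ + 1 with hMdef
  have hM0 : 0 < M := by
    have : (0:ℝ) ≤ ‖mkOfCompact g‖ := norm_nonneg _
    linarith
  have hgM : ∀ x, g x < M := by
    intro x
    have h1 : ‖mkOfCompact g x‖ ≤ ‖mkOfCompact g‖ := norm_coe_le_norm _ x
    have h2 : g x ≤ |g x| := le_abs_self _
    rw [mkOfCompact_apply, Real.norm_eq_abs] at h1
    linarith
  have key : ∀ n' : ℕ,
      ∫⁻ x, ENNReal.ofReal (g x) ∂μ ≤ ENNReal.ofReal (M / (n' + 1)) + ENNReal.ofReal (ℓ g) := by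
    intro n'
    set n : ℕ := n' + 1 with hndef
    set δ : ℝ := M / n with hδdef
    have hδ : 0 < δ := by positivity
    have hnδ : (n : ℝ) * δ = M := by
      have hn0 : (n:ℝ) ≠ 0 := by rw [hndef]; positivity
      rw [hδdef]; field_simp
    set K : ℕ → Set X := fun j => {x | (j:ℝ) * δ ≤ g x} with hKdef
    have hKclosed : ∀ j, IsClosed (K j) := fun j =>
      isClosed_le continuous_const g.continuous
    have hKmeas : ∀ j, MeasurableSet (K j) := fun j => (hKclosed j).measurableSet
    -- pointwise bound
    have step1 : ∀ x, ENNReal.ofReal (g x) ≤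
        ∑ j ∈ Finset.range n, (K j).indicator (fun _ => ENNReal.ofReal δ) x := by
      intro x
      set m : ℕ := ⌊g x / δ⌋₊ with hmdef
      have hgx0 : 0 ≤ g x := hg x
      have hdiv0 : 0 ≤ g x / δ := by positivity
      have hmem : ∀ j ∈ Finset.range (m + 1), x ∈ K j := by
        intro j hj
        rw [Finset.mem_range] at hj
        have hjm : j ≤ m := Nat.lt_succ_iff.mp hj
        have : (j : ℝ) ≤ g x / δ := le_trans (Nat.cast_le.mpr hjm) (Nat.floor_le hdiv0)
        rw [hKdef]
        exact (le_div_iff₀ hδ).mp this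
      have hmn : m + 1 ≤ n := by
        have h1 : g x / δ < n := by
          rw [div_lt_iff₀ hδ]
          calc g x < M := hgM x
            _ = (n:ℝ) * δ := hnδ.symm
        have : m < n := Nat.floor_lt hdiv0 |>.mpr h1
        omega
      calc ENNReal.ofReal (g x) ≤ ENNReal.ofReal (((m:ℝ) + 1) * δ) := by
            apply ENNReal.ofReal_le_ofReal
            have := Nat.lt_floor_add_one (g x / δ)
            rw [← hmdef] at this
            nlinarith [(div_lt_iff₀ hδ).mp this]
        _ = ∑ j ∈ Finset.range (m + 1), (K j).indicator (fun _ => ENNReal.ofReal δ) x := by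
            rw [Finset.sum_congr rfl (fun j hj => indicator_of_mem (hmem j hj)
              (fun _ => ENNReal.ofReal δ))]
            rw [Finset.sum_const, Finset.card_range, nsmul_eq_mul]
            rw [ENNReal.ofReal_mul (by positivity)]
            congr 1
            rw [show ((m:ℝ) + 1) = ((m + 1 : ℕ) : ℝ) by push_cast; ring,
              ENNReal.ofReal_natCast]
        _ ≤ ∑ j ∈ Finset.range n, (K j).indicator (fun _ => ENNReal.ofReal δ) x := by
            apply Finset.sum_le_sum_of_subset
            exact Finset.range_subset_range.mpr hmn
    -- integrate
    have step2 : ∫⁻ x, ENNReal.ofReal (g x) ∂μ ≤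
        ∑ j ∈ Finset.range n, ENNReal.ofReal δ * μ (K j) := by
      calc ∫⁻ x, ENNReal.ofReal (g x) ∂μ
          ≤ ∫⁻ x, ∑ j ∈ Finset.range n, (K j).indicator (fun _ => ENNReal.ofReal δ) x ∂μ :=
            lintegral_mono step1
        _ = ∑ j ∈ Finset.range n, ∫⁻ x, (K j).indicator (fun _ => ENNReal.ofReal δ) x ∂μ :=
            lintegral_finset_sum _ (fun j _ => (measurable_const.indicator (hKmeas j)))
        _ = ∑ j ∈ Finset.range n, ENNReal.ofReal δ * μ (K j) := by
            refine Finset.sum_congr rfl fun j _ => ?_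
            rw [lintegral_indicator (hKmeas j), setLIntegral_const]
    -- test functions
    set m_ : ℕ → C(X, ℝ) := fun j =>
      ⟨fun x => min (g x) ((j:ℝ) * δ), g.continuous.min continuous_const⟩ with hm_def
    set F : ℕ → C(X, ℝ) := fun j => δ⁻¹ • (m_ (j+1) - m_ j) with hFdef
    have hF0 : ∀ j x, 0 ≤ F j x := by
      intro j x
      have : m_ j x ≤ m_ (j+1) x := by
        simp only [hm_def, ContinuousMap.coe_mk]
        apply min_le_min le_rfl
        push_cast
        nlinarith [hδ.le]
      simp only [hFdef, ContinuousMap.smul_apply, ContinuousMap.sub_apply, smul_eq_mul]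
      have := sub_nonneg.mpr this
      positivity
    have hF1 : ∀ j, ∀ x ∈ K (j+1), 1 ≤ F j x := by
      intro j x hx
      have hxm : ((j:ℝ) + 1) * δ ≤ g x := by
        have := hx
        simp only [hKdef, mem_setOf_eq] at this
        push_cast at this
        linarith
      have h1 : m_ (j+1) x = ((j:ℝ)+1) * δ := by
        simp only [hm_def, ContinuousMap.coe_mk]
        rw [min_eq_right]
        · push_cast; ring
        · push_cast; linarith
      have h2 : m_ j x = (j:ℝ) * δ := by
        simp only [hm_def, ContinuousMap.coe_mk]
        rw [min_eq_right]
        nlinarith [hδ.le]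
      simp only [hFdef, ContinuousMap.smul_apply, ContinuousMap.sub_apply, smul_eq_mul,
        h1, h2]
      rw [show ((j:ℝ)+1) * δ - (j:ℝ) * δ = δ by ring]
      rw [inv_mul_cancel₀ hδ.ne']
    have hμK : ∀ j, μ (K (j+1)) ≤ ENNReal.ofReal (ℓ (F j)) := by
      intro j
      exact hA ⟨K (j+1), IsCompact.of_isClosed_subset isCompact_univ (hKclosed (j+1))
        (subset_univ _)⟩ (F j) (hF0 j) (hF1 j)
    have hℓF : ∀ j, δ * ℓ (F j) = ℓ (m_ (j+1)) - ℓ (m_ j) := by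
      intro j
      rw [hFdef]
      simp only
      rw [hsmul, hsub]
      field_simp
    have hm0 : ℓ (m_ 0) = 0 := by
      have : m_ 0 = 0 := by
        ext x
        simp only [hm_def, ContinuousMap.coe_mk, Nat.cast_zero, zero_mul,
          ContinuousMap.zero_apply]
        exact min_eq_right (hg x)
      rw [this, hzero]
    have htel : ∑ j ∈ Finset.range n', δ * ℓ (F j) = ℓ (m_ n') := by
      calc ∑ j ∈ Finset.range n', δ * ℓ (F j)
          = ∑ j ∈ Finset.range n', (ℓ (m_ (j+1)) - ℓ (m_ j)) :=
            Finset.sum_congr rfl fun j _ => hℓF j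
        _ = ℓ (m_ n') - ℓ (m_ 0) := Finset.sum_range_sub (fun j => ℓ (m_ j)) n'
        _ = ℓ (m_ n') := by rw [hm0, sub_zero]
    have hmle : ℓ (m_ n') ≤ ℓ g := by
      apply hmono
      intro x
      simp only [hm_def, ContinuousMap.coe_mk]
      exact min_le_left _ _
    -- assemble
    have split : ∑ j ∈ Finset.range n, ENNReal.ofReal δ * μ (K j)
        = ENNReal.ofReal δ * μ (K 0) +
          ∑ j ∈ Finset.range n', ENNReal.ofReal δ * μ (K (j+1)) := by
      rw [hndef, Finset.sum_range_succ']
      ring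
    have hterm0 : ENNReal.ofReal δ * μ (K 0) ≤ ENNReal.ofReal δ := by
      calc ENNReal.ofReal δ * μ (K 0) ≤ ENNReal.ofReal δ * 1 := by
            apply mul_le_mul_right
            exact le_trans (measure_mono (subset_univ _)) hμuniv
        _ = ENNReal.ofReal δ := mul_one _
    have hterms : ∑ j ∈ Finset.range n', ENNReal.ofReal δ * μ (K (j+1))
        ≤ ENNReal.ofReal (ℓ g) := by
      calc ∑ j ∈ Finset.range n', ENNReal.ofReal δ * μ (K (j+1))
          ≤ ∑ j ∈ Finset.range n', ENNReal.ofReal δ * ENNReal.ofReal (ℓ (F j)) :=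
            Finset.sum_le_sum fun j _ => mul_le_mul_right (hμK j) _
        _ = ∑ j ∈ Finset.range n', ENNReal.ofReal (δ * ℓ (F j)) := by
            refine Finset.sum_congr rfl fun j _ => ?_
            rw [ENNReal.ofReal_mul hδ.le]
        _ = ENNReal.ofReal (∑ j ∈ Finset.range n', δ * ℓ (F j)) := by
            rw [ENNReal.ofReal_sum_of_nonneg]
            intro j _
            exact mul_nonneg hδ.le (hlnn _ (hF0 j))
        _ = ENNReal.ofReal (ℓ (m_ n')) := by rw [htel]
        _ ≤ ENNReal.ofReal (ℓ g) := ENNReal.ofReal_le_ofReal hmle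
    calc ∫⁻ x, ENNReal.ofReal (g x) ∂μ
        ≤ ∑ j ∈ Finset.range n, ENNReal.ofReal δ * μ (K j) := step2
      _ = ENNReal.ofReal δ * μ (K 0) +
          ∑ j ∈ Finset.range n', ENNReal.ofReal δ * μ (K (j+1)) := split
      _ ≤ ENNReal.ofReal δ + ENNReal.ofReal (ℓ g) := add_le_add hterm0 hterms
      _ = ENNReal.ofReal (M / (n' + 1)) + ENNReal.ofReal (ℓ g) := by
          rw [hδdef, hndef]; push_cast; ring_nf
  -- let n → ∞
  refine ENNReal.le_of_forall_pos_le_add fun ε hε _ => ?_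
  obtain ⟨n', hn'⟩ := exists_nat_gt (M / ε)
  have hεR : (0:ℝ) < ε := hε
  have hn'0 : M / (↑n' + 1) < ε := by
    rw [div_lt_iff₀ (by positivity)]
    have h1 : M / ε < (n' : ℝ) + 1 := by linarith
    rw [div_lt_iff₀ hεR] at h1
    linarith
  calc ∫⁻ x, ENNReal.ofReal (g x) ∂μ
      ≤ ENNReal.ofReal (M / (n' + 1)) + ENNReal.ofReal (ℓ g) := key n'
    _ ≤ ENNReal.ofReal ε + ENNReal.ofReal (ℓ g) :=
        add_le_add (ENNReal.ofReal_le_ofReal hn'0.le) le_rfl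
    _ = ENNReal.ofReal (ℓ g) + ε := by
        rw [add_comm, ENNReal.ofReal_coe_nnreal]

theorem integral_eq {ℓ : C(X, ℝ) → ℝ} {μ : Measure X}
    (hB : ∀ g : C(X, ℝ), (∀ x, 0 ≤ g x) →
      ∫⁻ x, ENNReal.ofReal (g x) ∂μ ≤ ENNReal.ofReal (ℓ g))
    [IsProbabilityMeasure μ]
    (hadd : ∀ F G, ℓ (F + G) = ℓ F + ℓ G)
    (hconst : ∀ c : ℝ, ℓ (ContinuousMap.const X c) = c)
    (hmono : ∀ F G : C(X, ℝ), (∀ x, F x ≤ G x) → ℓ F ≤ ℓ G)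
    (hzero : ℓ 0 = 0)
    (F : C(X, ℝ)) : ∫ x, F x ∂μ = ℓ F := by
  have hint : ∀ G : C(X, ℝ), Integrable (fun x => G x) μ := by
    intro G
    have := BoundedContinuousFunction.integrable μ (mkOfCompact G)
    exact this
  have hle : ∀ G : C(X, ℝ), ∫ x, G x ∂μ ≤ ℓ G := by
    intro G
    set c : ℝ := ‖mkOfCompact G‖ with hcdef
    set g : C(X, ℝ) := G + ContinuousMap.const X c with hgdef
    have hg0 : ∀ x, 0 ≤ g x := by
      intro x
      have h1 : ‖mkOfCompact G x‖ ≤ ‖mkOfCompact G‖ := norm_coe_le_norm _ x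
      rw [mkOfCompact_apply, Real.norm_eq_abs] at h1
      have h2 := neg_abs_le (G x)
      simp only [hgdef, ContinuousMap.add_apply, ContinuousMap.const_apply]
      linarith
    have hgnn : 0 ≤ ℓ g := by
      have := hmono 0 g (by simpa using hg0); simpa [hzero] using this
    have e1 : ∫ x, g x ∂μ = (∫⁻ x, ENNReal.ofReal (g x) ∂μ).toReal :=
      integral_eq_lintegral_of_nonneg_ae (ae_of_all _ hg0)
        g.continuous.aestronglyMeasurable
    have e2 : (∫⁻ x, ENNReal.ofReal (g x) ∂μ).toReal ≤ ℓ g := by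
      have h := hB g hg0
      calc (∫⁻ x, ENNReal.ofReal (g x) ∂μ).toReal
          ≤ (ENNReal.ofReal (ℓ g)).toReal := ENNReal.toReal_mono ENNReal.ofReal_ne_top h
        _ = ℓ g := ENNReal.toReal_ofReal hgnn
    have e3 : ∫ x, g x ∂μ = ∫ x, G x ∂μ + c := by
      simp only [hgdef, ContinuousMap.add_apply, ContinuousMap.const_apply]
      rw [integral_add (hint G) (integrable_const c), integral_const]
      simp [measure_univ]
    have e4 : ℓ g = ℓ G + c := by rw [hgdef, hadd, hconst]
    have : ∫ x, G x ∂μ + c ≤ ℓ G + c := by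
      rw [← e3, ← e4, e1]; exact e2
    linarith
  have h1 := hle F
  have h2 := hle (-F)
  have hneg : ℓ (-F) = -ℓ F := by
    have := hadd F (-F)
    simp only [add_neg_cancel, hzero] at this
    linarith
  have hnegint : ∫ x, (-F) x ∂μ = -∫ x, F x ∂μ := by
    simp only [ContinuousMap.neg_apply]
    rw [integral_neg]
  rw [hnegint, hneg] at h2
  linarith

theorem exists_repr {ℓ : C(X, ℝ) → ℝ} (hℓ : IsPosFunctional ℓ) :
    ∃ μ : Measure X, IsProbabilityMeasure μ ∧ ∀ F : C(X, ℝ), ∫ x, F x ∂μ = ℓ F := by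
  set C : MeasureTheory.Content X := rieszContent hℓ with hCdef
  set μ : Measure X := C.measure with hμdef
  have hC : ∀ (K : Compacts X) (F : C(X, ℝ)), (∀ x, 0 ≤ F x) → (∀ x ∈ (K : Set X), 1 ≤ F x) →
      C K ≤ (ℓ F).toNNReal := fun K F h0 h1 => by
    show ((rc ℓ K : ℝ≥0) : ℝ≥0∞) ≤ ((ℓ F).toNNReal : ℝ≥0∞)
    exact_mod_cast rc_le (ℓ := ℓ) ⟨h0, h1⟩
  have hA : ∀ (K : Compacts X) (F : C(X, ℝ)), (∀ x, 0 ≤ F x) → (∀ x ∈ (K : Set X), 1 ≤ F x) →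
      μ (K : Set X) ≤ ENNReal.ofReal (ℓ F) := fun K F h0 h1 =>
    measure_compacts_le C hC hℓ.smul hℓ.mono hℓ.zero h0 h1
  have hle : μ univ ≤ 1 := by
    have h := hA ⟨univ, isCompact_univ⟩ 1 (fun x => zero_le_one) (fun x _ => le_rfl)
    simpa [hℓ.one] using h
  have hge : (1 : ℝ≥0∞) ≤ μ univ := by
    have h1 : (1:ℝ≥0) ≤ rc ℓ ⟨univ, isCompact_univ⟩ := by
      refine le_csInf (rc_image_nonempty _) ?_
      rintro t ⟨F, hF, rfl⟩
      have hF1 : (1:ℝ) ≤ ℓ F := by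
        have := hℓ.mono 1 F (fun x => by simpa using hF.2 x (mem_univ x))
        rwa [hℓ.one] at this
      rw [← Real.toNNReal_one]
      exact Real.toNNReal_le_toNNReal hF1
    have h2 := C.le_outerMeasure_compacts ⟨univ, isCompact_univ⟩
    have h3 : μ univ = C.outerMeasure univ := C.measure_apply MeasurableSet.univ
    calc (1 : ℝ≥0∞) ≤ (rc ℓ ⟨univ, isCompact_univ⟩ : ℝ≥0∞) := by exact_mod_cast h1
      _ ≤ C.outerMeasure univ := h2
      _ = μ univ := h3.symm
  have hprob : IsProbabilityMeasure μ := ⟨le_antisymm hle hge⟩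
  haveI := hprob
  have hB : ∀ g : C(X, ℝ), (∀ x, 0 ≤ g x) →
      ∫⁻ x, ENNReal.ofReal (g x) ∂μ ≤ ENNReal.ofReal (ℓ g) := fun g hg =>
    lintegral_le hA hle hℓ.add hℓ.smul hℓ.mono hℓ.zero g hg
  exact ⟨μ, hprob, fun F => integral_eq hB hℓ.add hℓ.const hℓ.mono hℓ.zero F⟩

end UBLB

theorem uniform_birkhoff_lower_bound
    {X : Type*} [MetricSpace X] [CompactSpace X] [Nonempty X]
    [MeasurableSpace X] [BorelSpace X]
    (f : X → X) (hf : Continuous f)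
    (φ : X → ℝ) (hφ : Continuous φ) (α : ℝ)
    (hmeas : ∀ μ : Measure X, IsProbabilityMeasure μ → MeasurePreserving f μ μ →
      α < ∫ x, φ x ∂μ) :
    ∃ N : ℕ, ∀ n ≥ N, ∀ x : X,
      α < (∑ i ∈ Finset.range n, φ (f^[i] x)) / n := by
  by_contra hcon
  push_neg at hcon
  have h' : ∀ N : ℕ, ∃ p : ℕ × X, N + 1 ≤ p.1 ∧
      (∑ i ∈ Finset.range p.1, φ (f^[i] p.2)) / p.1 ≤ α := by
    intro N
    obtain ⟨n, hn, x, hx⟩ := hcon (N + 1)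
    exact ⟨(n, x), hn, hx⟩
  choose p hp1 hp2 using h'
  set nn : ℕ → ℕ := fun k => (p k).1 with hnn_def
  set xx : ℕ → X := fun k => (p k).2 with hxx_def
  have hnn : ∀ k, k + 1 ≤ nn k := hp1
  have hnn0 : ∀ k, (0:ℝ) < (nn k : ℝ) := by
    intro k
    have := hnn k
    exact_mod_cast Nat.lt_of_lt_of_le (Nat.succ_pos k) this
  -- the empirical averages
  set A : ℕ → C(X, ℝ) → ℝ :=
    fun k G => (∑ i ∈ Finset.range (nn k), G (f^[i] (xx k))) / (nn k) with hA_def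
  have hAbound : ∀ (G : C(X, ℝ)) (k), |A k G| ≤ ‖mkOfCompact G‖ := by
    intro G k
    have h1 : |∑ i ∈ Finset.range (nn k), G (f^[i] (xx k))| ≤
        ∑ i ∈ Finset.range (nn k), ‖mkOfCompact G‖ := by
      refine (Finset.abs_sum_le_sum_abs _ _).trans (Finset.sum_le_sum fun i _ => ?_)
      have := norm_coe_le_norm (mkOfCompact G) (f^[i] (xx k))
      rw [mkOfCompact_apply, Real.norm_eq_abs] at this
      exact this
    rw [Finset.sum_const, Finset.card_range, nsmul_eq_mul] at h1
    rw [hA_def]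
    simp only
    rw [abs_div, abs_of_pos (hnn0 k)]
    rw [div_le_iff₀ (hnn0 k)]
    calc |∑ i ∈ Finset.range (nn k), G (f^[i] (xx k))| ≤ (nn k : ℝ) * ‖mkOfCompact G‖ := h1
      _ = ‖mkOfCompact G‖ * (nn k : ℝ) := mul_comm _ _
  -- ultrafilter limit
  obtain ⟨U, hU⟩ := Ultrafilter.exists_le (atTop : Filter ℕ)
  have hlim : ∀ G : C(X, ℝ), ∃ c, Tendsto (fun k => A k G) U (𝓝 c) := by
    intro G
    set M : ℝ := ‖mkOfCompact G‖ with hM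
    have hmem : ∀ k, A k G ∈ Icc (-M) M := fun k => abs_le.mp (hAbound G k)
    have hle : ↑(U.map (fun k => A k G)) ≤ 𝓟 (Icc (-M) M) := by
      rw [Ultrafilter.coe_map, le_principal_iff, mem_map]
      filter_upwards with k using hmem k
    obtain ⟨c, _, hc⟩ := (isCompact_Icc (a := -M) (b := M)).ultrafilter_le_nhds
      (U.map (fun k => A k G)) hle
    exact ⟨c, hc⟩
  choose L hL using hlim
  -- properties of L
  have hLadd : ∀ F G, L (F + G) = L F + L G := by
    intro F G
    have h1 : Tendsto (fun k => A k (F + G)) U (𝓝 (L F + L G)) := by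
      have : (fun k => A k (F + G)) = fun k => A k F + A k G := by
        funext k
        simp only [hA_def, ContinuousMap.add_apply, Finset.sum_add_distrib, add_div]
      rw [this]
      exact (hL F).add (hL G)
    exact tendsto_nhds_unique (hL (F + G)) h1
  have hLsmul : ∀ (c : ℝ) F, L (c • F) = c * L F := by
    intro c F
    have h1 : Tendsto (fun k => A k (c • F)) U (𝓝 (c * L F)) := by
      have : (fun k => A k (c • F)) = fun k => c * A k F := by
        funext k
        simp only [hA_def, ContinuousMap.smul_apply, smul_eq_mul, ← Finset.mul_sum, mul_div_assoc]
      rw [this]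
      exact (hL F).const_mul c
    exact tendsto_nhds_unique (hL (c • F)) h1
  have hLmono : ∀ F G : C(X, ℝ), (∀ x, F x ≤ G x) → L F ≤ L G := by
    intro F G h
    refine le_of_tendsto_of_tendsto' (hL F) (hL G) fun k => ?_
    simp only [hA_def]
    apply div_le_div_of_nonneg_right _ (hnn0 k).le
    exact Finset.sum_le_sum fun i _ => h _
  have hLone : L 1 = 1 := by
    have h1 : Tendsto (fun k => A k 1) U (𝓝 1) := by
      have : (fun k => A k (1 : C(X, ℝ))) = fun _ => (1:ℝ) := by
        funext k
        simp only [hA_def, ContinuousMap.one_apply, Finset.sum_const, Finset.card_range,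
          nsmul_eq_mul, mul_one]
        exact div_self (hnn0 k).ne'
      rw [this]
      exact tendsto_const_nhds
    exact tendsto_nhds_unique (hL 1) h1
  -- invariance
  have hLinv : ∀ G : C(X, ℝ), L (G.comp ⟨f, hf⟩) = L G := by
    intro G
    set M : ℝ := ‖mkOfCompact G‖ with hM
    have hM0 : 0 ≤ M := norm_nonneg _
    have hGb : ∀ y, |G y| ≤ M := by
      intro y
      have := norm_coe_le_norm (mkOfCompact G) y
      rw [mkOfCompact_apply, Real.norm_eq_abs] at this
      exact this
    have hdiff : ∀ k, A k (G.comp ⟨f, hf⟩) - A k G =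
        (G (f^[nn k] (xx k)) - G (xx k)) / (nn k) := by
      intro k
      simp only [hA_def, ContinuousMap.comp_apply, ContinuousMap.coe_mk]
      rw [div_sub_div_same]
      congr 1
      have h3 : ∑ i ∈ Finset.range (nn k), G (f (f^[i] (xx k)))
          = ∑ i ∈ Finset.range (nn k), G (f^[i+1] (xx k)) :=
        Finset.sum_congr rfl fun i _ => by rw [Function.iterate_succ_apply']
      have h1 := Finset.sum_range_succ (fun i => G (f^[i] (xx k))) (nn k)
      have h2 := Finset.sum_range_succ' (fun i => G (f^[i] (xx k))) (nn k)
      simp only [Function.iterate_zero_apply] at h1 h2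
      rw [h3]
      linarith [h1, h2]
    have htend0 : Tendsto (fun k => A k (G.comp ⟨f, hf⟩) - A k G) atTop (𝓝 0) := by
      have hbound : ∀ k, ‖A k (G.comp ⟨f, hf⟩) - A k G‖ ≤ (2 * M) / (nn k : ℝ) := by
        intro k
        rw [hdiff k, Real.norm_eq_abs, abs_div, abs_of_pos (hnn0 k)]
        apply div_le_div_of_nonneg_right _ (hnn0 k).le
        calc |G (f^[nn k] (xx k)) - G (xx k)| ≤ |G (f^[nn k] (xx k))| + |G (xx k)| :=
              abs_sub _ _
          _ ≤ M + M := add_le_add (hGb _) (hGb _)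
          _ = 2 * M := by ring
      have hg0 : Tendsto (fun k => (2 * M) / (nn k : ℝ)) atTop (𝓝 0) := by
        have hnntop : Tendsto nn atTop atTop :=
          tendsto_atTop_mono (fun k => (Nat.le_succ k).trans (hnn k)) tendsto_id
        have h := (tendsto_const_div_atTop_nhds_zero_nat (2 * M)).comp hnntop
        exact h
      exact squeeze_zero_norm hbound hg0
    have htendU : Tendsto (fun k => A k (G.comp ⟨f, hf⟩) - A k G) U (𝓝 0) :=
      htend0.mono_left hU
    have h2 : Tendsto (fun k => A k (G.comp ⟨f, hf⟩) - A k G) U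
        (𝓝 (L (G.comp ⟨f, hf⟩) - L G)) := (hL _).sub (hL G)
    have := tendsto_nhds_unique h2 htendU
    linarith
  -- L φ ≤ α
  set φc : C(X, ℝ) := ⟨φ, hφ⟩ with hφc
  have hLφ : L φc ≤ α := by
    refine le_of_tendsto (hL φc) (Eventually.of_forall fun k => ?_)
    simp only [hA_def, hφc, ContinuousMap.coe_mk]
    exact hp2 k
  -- representing measure
  obtain ⟨μ, hμprob, hμrepr⟩ := UBLB.exists_repr (X := X) ⟨hLadd, hLsmul, hLmono, hLone⟩
  haveI := hμprob
  have hinv : MeasurePreserving f μ μ := by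
    refine ⟨hf.measurable, ?_⟩
    haveI : IsProbabilityMeasure (μ.map f) :=
      Measure.isProbabilityMeasure_map hf.measurable.aemeasurable
    apply ext_of_forall_lintegral_eq_of_IsFiniteMeasure
    intro g
    set G : C(X, ℝ) := ⟨fun x => (g x : ℝ), NNReal.continuous_coe.comp g.continuous⟩ with hG
    have hGnn : ∀ x, 0 ≤ G x := fun x => (g x).2
    have hint : ∀ H : C(X, ℝ), Integrable (fun x => H x) μ := by
      intro H
      have := BoundedContinuousFunction.integrable μ (mkOfCompact H)
      exact this
    have key : ∀ (H : C(X, ℝ)), (∀ x, 0 ≤ H x) →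
        ∫⁻ x, ENNReal.ofReal (H x) ∂μ = ENNReal.ofReal (L H) := by
      intro H hH
      rw [← hμrepr H]
      rw [← ofReal_integral_eq_lintegral_ofReal (hint H) (ae_of_all _ hH)]
    have hmeasg : Measurable (fun x : X => ((g x : ℝ≥0∞))) :=
      measurable_coe_nnreal_ennreal.comp g.continuous.measurable
    have e1 : ∫⁻ x, (g x : ℝ≥0∞) ∂(μ.map f) = ∫⁻ x, ((g (f x)) : ℝ≥0∞) ∂μ :=
      lintegral_map hmeasg hf.measurable
    have e2 : ∫⁻ x, ((g (f x)) : ℝ≥0∞) ∂μ = ENNReal.ofReal (L (G.comp ⟨f, hf⟩)) := by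
      have : ∀ x, ((g (f x)) : ℝ≥0∞) = ENNReal.ofReal ((G.comp ⟨f, hf⟩) x) := by
        intro x
        simp only [hG, ContinuousMap.comp_apply, ContinuousMap.coe_mk,
          ENNReal.ofReal_coe_nnreal]
      simp_rw [this]
      exact key _ (fun x => (g (f x)).2)
    have e3 : ∫⁻ x, (g x : ℝ≥0∞) ∂μ = ENNReal.ofReal (L G) := by
      have : ∀ x, ((g x) : ℝ≥0∞) = ENNReal.ofReal (G x) := by
        intro x
        simp only [hG, ContinuousMap.coe_mk, ENNReal.ofReal_coe_nnreal]
      simp_rw [this]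
      exact key _ hGnn
    rw [e1, e2, e3, hLinv G]
  have hcontra := hmeas μ hμprob hinv
  have : ∫ x, φ x ∂μ = L φc := by
    have := hμrepr φc
    simpa [hφc] using this
  linarith
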